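/- Stability of the informative fixed point in noiseless dictionary learning: let 0 < ρ < α and π > 0. The 2×2 real matrix M = [[1/π, 1/(πρ)], [ρ²/α, ρ/α]], which is the linearization of the noiseless (Δ = 0) Bayes-optimal state-evolution update around the informative fixed point m_F = 1, m_x = ρ, has characteristic polynomial λ·(λ − (1/π + ρ/α)); in particular its eigenvalues are 0 and 1/π + ρ/α, and every eigenvalue of M has absolute value strictly less than 1 if and only if π > α/(α − ρ). Hence the zero-MSE fixed point of the state evolution is locally stable exactly above the counting bound π* = α/(α − ρ). -/

import Mathlib

open Polynomial

/-- Stability of the informative fixed point in noiseless dictionary learning: the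
linearization `M = [[1/π, 1/(πρ)], [ρ²/α, ρ/α]]` of the state evolution around
`m_F = 1, m_x = ρ` has characteristic polynomial `λ(λ − (1/π + ρ/α))`, eigenvalues
`0` and `1/π + ρ/α`, and all eigenvalues have absolute value `< 1` iff
`π > α/(α − ρ)`. -/
theorem informative_fixed_point_stability_dictionary_learning
    (α ρ π : ℝ) (hρ : 0 < ρ) (hρα : ρ < α) (hπ : 0 < π)
    (M : Matrix (Fin 2) (Fin 2) ℝ)
    (hM : M = !![1 / π, 1 / (π * ρ); ρ ^ 2 / α, ρ / α]) :
    M.charpoly = X * (X - C (1 / π + ρ / α)) ∧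
      spectrum ℝ M = {0, 1 / π + ρ / α} ∧
      ((∀ lam ∈ spectrum ℝ M, |lam| < 1) ↔ α / (α - ρ) < π) := by
  subst hM
  have hα : (0:ℝ) < α := hρ.trans hρα
  have hαρ : (0:ℝ) < α - ρ := by linarith
  set t : ℝ := 1 / π + ρ / α with ht
  have htpos : 0 < t := by positivity
  -- spectrum characterization
  have hspec : ∀ x : ℝ, x ∈ spectrum ℝ (!![1 / π, 1 / (π * ρ); ρ ^ 2 / α, ρ / α]) ↔
      x * (x - t) = 0 := by
    intro x
    have hent : (algebraMap ℝ (Matrix (Fin 2) (Fin 2) ℝ) x -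
        !![1 / π, 1 / (π * ρ); ρ ^ 2 / α, ρ / α])
        = !![x - 1/π, -(1/(π*ρ)); -(ρ^2/α), x - ρ/α] := by
      ext i j; fin_cases i <;> fin_cases j <;>
        simp [Matrix.algebraMap_matrix_apply]
    have hdet : (x - 1/π) * (x - ρ/α) - (-(1/(π*ρ))) * (-(ρ^2/α)) = x * (x - t) := by
      rw [ht]; field_simp; ring
    rw [spectrum.mem_iff, Matrix.isUnit_iff_isUnit_det, isUnit_iff_ne_zero, not_ne_iff,
      hent, Matrix.det_fin_two_of, hdet]
  refine ⟨?_, ?_, ?_⟩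
  · rw [Matrix.charpoly, Matrix.det_fin_two]
    simp [Matrix.charmatrix_apply_eq, Matrix.charmatrix_apply_ne]
    ring_nf
    have h0 : π⁻¹ * (ρ * α⁻¹) - π⁻¹ * ρ⁻¹ * (ρ ^ 2 * α⁻¹) = 0 := by
      field_simp; ring
    rw [← C_mul, ← C_mul, ← C_mul, add_sub_assoc, ← C_sub, h0, C_0, add_zero, ht, one_div,
      div_eq_mul_inv, C_add]
    ring
  · ext x
    rw [hspec x, mul_eq_zero, sub_eq_zero]
    simp [Set.mem_insert_iff]
  · constructor
    · intro h
      have htmem : t ∈ spectrum ℝ (!![1 / π, 1 / (π * ρ); ρ ^ 2 / α, ρ / α]) := by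
        rw [hspec]; ring
      have := h t htmem
      rw [abs_of_pos htpos] at this
      rw [div_lt_iff₀ hαρ]
      rw [ht] at this
      rw [div_add_div _ _ (ne_of_gt hπ) (ne_of_gt hα), div_lt_one (by positivity)] at this
      nlinarith
    · intro h lam hlam
      rw [hspec] at hlam
      rcases mul_eq_zero.mp hlam with h0 | h0
      · simp [h0]
      · have : lam = t := by linarith [sub_eq_zero.mp h0]
        rw [this, abs_of_pos htpos, ht]
        rw [div_lt_iff₀ hαρ] at h
        rw [div_add_div _ _ (ne_of_gt hπ) (ne_of_gt hα), div_lt_one (by positivity)]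
        nlinarith
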